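/- Let Z₁,…,Zₙ be independent finite random variables where Zₖ has distribution pₖ on a finite set S, and let cₖ : S → ℝ be positive weight functions. Then log E[ c₁(Z₁) / ∑_{k=1}^n cₖ(Zₖ) ] ≥ E[log c₁(Z₁)] − log( ∑_{k=1}^n E[cₖ(Zₖ)] ). (The ELBO is a lower bound on the log-likelihood for the Cox mixture of experts.) -/
import Mathlib


open Finset

private lemma marginal_sum {n : ℕ} {S : Type*} [Fintype S]
    (p : Fin n → S → ℝ) (hpsum : ∀ k, ∑ s, p k s = 1)
    (k : Fin n) (g : S → ℝ) :
    ∑ z : Fin n → S, (∏ j, p j (z j)) * g (z k) = ∑ s, p k s * g s := by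
  have h1 : ∀ z : Fin n → S,
      (∏ j, p j (z j)) * g (z k) = ∏ j, (p j (z j) * (if j = k then g (z j) else 1)) := by
    intro z
    rw [Finset.prod_mul_distrib]
    congr 1
    simp
  simp_rw [h1]
  rw [← Fintype.prod_sum (f := fun j s => p j s * if j = k then g s else 1)]
  have h2 : ∀ j, (∑ s, p j s * (if j = k then g s else 1))
      = if j = k then ∑ s, p k s * g s else 1 := by
    intro j
    split_ifs with h
    · subst h; rfl
    · simp [hpsum j]
  simp_rw [h2]
  simp

theorem elbo_lower_bounds_log_likelihood
    (n : ℕ) [NeZero n] (S : Type*) [Fintype S] [Nonempty S]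
    (p : Fin n → S → ℝ) (c : Fin n → S → ℝ)
    (hp : ∀ k s, 0 < p k s) (hpsum : ∀ k, ∑ s, p k s = 1)
    (hc : ∀ k s, 0 < c k s) :
    Real.log (∑ z : Fin n → S,
        (∏ k, p k (z k)) * (c 0 (z 0) / ∑ k, c k (z k))) ≥
      (∑ s, p 0 s * Real.log (c 0 s)) -
        Real.log (∑ k, ∑ s, p k s * c k s) := by
  set q : (Fin n → S) → ℝ := fun z => ∏ j, p j (z j) with hq
  set Y : (Fin n → S) → ℝ := fun z => ∑ k, c k (z k) with hY
  have hq0 : ∀ z, 0 < q z := fun z => Finset.prod_pos (fun j _ => hp j (z j))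
  have hY0 : ∀ z, 0 < Y z := fun z => Finset.sum_pos (fun k _ => hc k (z k)) ⟨0, by simp⟩
  have hqsum : ∑ z : Fin n → S, q z = 1 := by
    have := marginal_sum p hpsum 0 (fun _ => 1)
    simpa [hpsum 0] using this
  have hlog := strictConcaveOn_log_Ioi.concaveOn
  -- Jensen 1
  have j1 : (∑ z : Fin n → S, q z * Real.log (c 0 (z 0) / Y z))
      ≤ Real.log (∑ z : Fin n → S, q z * (c 0 (z 0) / Y z)) := by
    have := hlog.le_map_sum (t := Finset.univ)
      (w := q) (p := fun z : Fin n → S => c 0 (z 0) / Y z)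
      (fun z _ => (hq0 z).le) hqsum
      (fun z _ => Set.mem_Ioi.mpr (div_pos (hc 0 (z 0)) (hY0 z)))
    simpa [smul_eq_mul] using this
  -- Jensen 2
  have j2 : (∑ z : Fin n → S, q z * Real.log (Y z))
      ≤ Real.log (∑ z : Fin n → S, q z * Y z) := by
    have := hlog.le_map_sum (t := Finset.univ) (w := q) (p := Y)
      (fun z _ => (hq0 z).le) hqsum
      (fun z _ => Set.mem_Ioi.mpr (hY0 z))
    simpa [smul_eq_mul] using this
  -- marginal computations
  have m1 : ∑ z : Fin n → S, q z * Real.log (c 0 (z 0))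
      = ∑ s, p 0 s * Real.log (c 0 s) :=
    marginal_sum p hpsum 0 (fun s => Real.log (c 0 s))
  have m2 : ∑ z : Fin n → S, q z * Y z = ∑ k, ∑ s, p k s * c k s := by
    have : ∀ z : Fin n → S, q z * Y z = ∑ k, q z * c k (z k) := by
      intro z; rw [hY, Finset.mul_sum]
    simp_rw [this]
    rw [Finset.sum_comm]
    exact Finset.sum_congr rfl fun k _ => marginal_sum p hpsum k (fun s => c k s)
  have split : ∀ z : Fin n → S,
      Real.log (c 0 (z 0) / Y z) = Real.log (c 0 (z 0)) - Real.log (Y z) := by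
    intro z
    exact Real.log_div (hc 0 (z 0)).ne' (hY0 z).ne'
  calc Real.log (∑ z : Fin n → S, q z * (c 0 (z 0) / Y z))
      ≥ ∑ z : Fin n → S, q z * Real.log (c 0 (z 0) / Y z) := j1
    _ = (∑ z : Fin n → S, q z * Real.log (c 0 (z 0)))
        - ∑ z : Fin n → S, q z * Real.log (Y z) := by
        simp_rw [split, mul_sub, Finset.sum_sub_distrib]
    _ ≥ (∑ s, p 0 s * Real.log (c 0 s)) - Real.log (∑ k, ∑ s, p k s * c k s) := by
        rw [m1, ← m2]
        exact sub_le_sub_left j2 _
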